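/- For every real x with −1 < x < 1, Π(−x, x) − (1/2)·K(x) = π/(4(x+1)). -/

import Mathlib

open Real MeasureTheory Filter

/-- Complete elliptic integral of the first kind. -/
noncomputable def ellK (z : ℝ) : ℝ :=
  ∫ x in (0:ℝ)..1, 1 / Real.sqrt ((1 - x ^ 2) * (1 - z ^ 2 * x ^ 2))

/-- Complete elliptic integral of the third kind. -/
noncomputable def ellPi (n z : ℝ) : ℝ :=
  ∫ x in (0:ℝ)..1, 1 / ((1 - n * x ^ 2) * Real.sqrt ((1 - x ^ 2) * (1 - z ^ 2 * x ^ 2)))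

/-- Mahler measure of `P_{1,k}(x,y) = x + 1/x + y + 1/y + k`. -/
noncomputable def mahlerP1 (k : ℝ) : ℝ :=
  ∫ θ in (0:ℝ)..1, ∫ φ in (0:ℝ)..1,
    Real.log (‖
      (Complex.exp (2 * Real.pi * Complex.I * θ) +
        (Complex.exp (2 * Real.pi * Complex.I * θ))⁻¹ +
       Complex.exp (2 * Real.pi * Complex.I * φ) +
        (Complex.exp (2 * Real.pi * Complex.I * φ))⁻¹ + (k : ℂ))‖)

/-- Mahler measure of `P̃_k(x,y) = √((k+4)/(k−4))·(x + 1/x) + y − 1/y − k/√(k−4)`. -/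
noncomputable def mahlerPt (k : ℝ) : ℝ :=
  ∫ θ in (0:ℝ)..1, ∫ φ in (0:ℝ)..1,
    Real.log (‖
      ((Real.sqrt ((k + 4) / (k - 4)) : ℂ) *
        (Complex.exp (2 * Real.pi * Complex.I * θ) +
          (Complex.exp (2 * Real.pi * Complex.I * θ))⁻¹) +
       Complex.exp (2 * Real.pi * Complex.I * φ) -
        (Complex.exp (2 * Real.pi * Complex.I * φ))⁻¹ -
       ((k / Real.sqrt (k - 4) : ℝ) : ℂ))‖)

/-- `B_k(e^{2πiθ}) = √((k+4)/(k−4))·2cos(2πθ) − k/√(k−4)`, real on the unit circle. -/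
noncomputable def Bt (k θ : ℝ) : ℝ :=
  Real.sqrt ((k + 4) / (k - 4)) * (2 * Real.cos (2 * Real.pi * θ)) - k / Real.sqrt (k - 4)

/-- `y₊(e^{2πiθ}) = (−B + √(B² + 4))/2`. -/
noncomputable def yPlus (k θ : ℝ) : ℝ := (-Bt k θ + Real.sqrt ((Bt k θ) ^ 2 + 4)) / 2

/-- `y₋(e^{2πiθ}) = (−B − √(B² + 4))/2`. -/
noncomputable def yMinus (k θ : ℝ) : ℝ := (-Bt k θ - Real.sqrt ((Bt k θ) ^ 2 + 4)) / 2

/-- Half-Mahler measure `m⁺(P̃_k) = ∫₀¹ log⁺|y₊(e^{2πiθ})| dθ`. -/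
noncomputable def mPlus (k : ℝ) : ℝ := ∫ θ in (0:ℝ)..1, max 0 (Real.log |yPlus k θ|)

/-- Half-Mahler measure `m⁻(P̃_k) = ∫₀¹ log⁺|y₋(e^{2πiθ})| dθ`. -/
noncomputable def mMinus (k : ℝ) : ℝ := ∫ θ in (0:ℝ)..1, max 0 (Real.log |yMinus k θ|)

section EllAux
open Set intervalIntegral Topology



/-- integrability of the K-integrand -/
private lemma gInt {x : ℝ} (hx1 : -1 < x) (hx2 : x < 1) : IntervalIntegrable
    (fun t : ℝ => 1 / Real.sqrt ((1 - t ^ 2) * (1 - x ^ 2 * t ^ 2))) volume 0 1 := by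
  have hxsq : x ^ 2 < 1 := by nlinarith
  have hbound : IntervalIntegrable
      (fun t : ℝ => (1 / Real.sqrt (1 - x ^ 2)) * (1 - t) ^ (-(1/2) : ℝ)) volume 0 1 := by
    have h1 : IntervalIntegrable (fun t : ℝ => t ^ (-(1/2) : ℝ)) volume 0 1 :=
      intervalIntegrable_rpow' (by norm_num)
    have h2 := (h1.comp_sub_left 1)
    simp only [sub_zero, sub_self] at h2
    exact (h2.symm.const_mul _)
  apply hbound.mono_fun
  · have hc : Continuous (fun t : ℝ => Real.sqrt ((1 - t ^ 2) * (1 - x ^ 2 * t ^ 2))) := by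
      continuity
    simp only [one_div]
    exact hc.measurable.inv.aestronglyMeasurable
  · rw [Filter.EventuallyLE, ae_restrict_iff' measurableSet_uIoc]
    refine Filter.Eventually.of_forall (fun t ht => ?_)
    rw [Set.uIoc_of_le (by norm_num : (0:ℝ) ≤ 1)] at ht
    obtain ⟨ht0, ht1⟩ := ht
    have h1t : 0 ≤ 1 - t := by linarith
    have hxx : 0 < 1 - x ^ 2 := by linarith
    have key : 1 / Real.sqrt ((1 - t ^ 2) * (1 - x ^ 2 * t ^ 2))
        ≤ (1 / Real.sqrt (1 - x ^ 2)) * (1 - t) ^ (-(1/2) : ℝ) := by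
      have hrw : (1 - t) ^ (-(1/2) : ℝ) = 1 / Real.sqrt (1 - t) := by
        rw [Real.rpow_neg h1t, Real.sqrt_eq_rpow]
        norm_num
      rw [hrw, div_mul_div_comm, one_mul, ← Real.sqrt_mul hxx.le]
      rcases eq_or_lt_of_le h1t with h | h
      · have ht : t = 1 := by linarith
        subst ht
        norm_num
      · have ht2 : t ^ 2 ≤ 1 := by nlinarith
        have hB : x ^ 2 * t ^ 2 ≤ 1 := by nlinarith [sq_nonneg x, sq_nonneg t]
        apply one_div_le_one_div_of_le
        · positivity
        · apply Real.sqrt_le_sqrt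
          nlinarith [mul_nonneg (mul_nonneg h1t ht0.le) (sub_nonneg.2 hB),
            mul_nonneg (mul_nonneg h1t (sq_nonneg x)) (sub_nonneg.2 ht2)]
    have hn1 : ‖1 / Real.sqrt ((1 - t ^ 2) * (1 - x ^ 2 * t ^ 2))‖
        = 1 / Real.sqrt ((1 - t ^ 2) * (1 - x ^ 2 * t ^ 2)) := by
      rw [Real.norm_eq_abs, abs_of_nonneg (by positivity)]
    have hn2 : ‖(1 / Real.sqrt (1 - x ^ 2)) * (1 - t) ^ (-(1/2) : ℝ)‖
        = (1 / Real.sqrt (1 - x ^ 2)) * (1 - t) ^ (-(1/2) : ℝ) := by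
      rw [Real.norm_eq_abs, abs_of_nonneg (by positivity)]
    rw [hn1, hn2]
    exact key


private lemma hasDerivF {x : ℝ} (hx1 : -1 < x) (hx2 : x < 1) {t : ℝ} (ht0 : 0 ≤ t) (ht1 : t < 1) :
    HasDerivAt (fun u : ℝ => (2*(1+x))⁻¹ *
        Real.arctan ((1+x)*u / Real.sqrt ((1 - u^2)*(1 - x^2*u^2))))
      ((1 - x*t^2) / (2*(1+x*t^2) * Real.sqrt ((1 - t^2)*(1 - x^2*t^2)))) t := by
  have hx0 : (0:ℝ) < 1 + x := by linarith
  have ht2 : t ^ 2 < 1 := by nlinarith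
  have hQt : 0 < (1 - t^2)*(1 - x^2*t^2) := by
    apply mul_pos (by nlinarith)
    nlinarith [sq_nonneg x, sq_nonneg t, sq_nonneg (x*t)]
  set s := Real.sqrt ((1 - t^2)*(1 - x^2*t^2)) with hs
  have hs0 : 0 < s := Real.sqrt_pos.2 hQt
  have hs2 : s ^ 2 = (1 - t^2)*(1 - x^2*t^2) := Real.sq_sqrt hQt.le
  have hp : (0:ℝ) < 1 + x*t^2 := by nlinarith [sq_nonneg t]
  have h1 : HasDerivAt (fun u : ℝ => 1 - u^2) (-(2*t)) t := by
    simpa using (hasDerivAt_pow 2 t).const_sub 1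
  have h2 : HasDerivAt (fun u : ℝ => 1 - x^2*u^2) (-(x^2*(2*t))) t := by
    simpa [mul_comm, mul_assoc] using ((hasDerivAt_pow 2 t).const_mul (x^2)).const_sub 1
  have hQd : HasDerivAt (fun u : ℝ => (1 - u^2)*(1 - x^2*u^2))
      (-(2*t) * (1 - x^2*t^2) + (1 - t^2) * -(x^2*(2*t))) t := h1.mul h2
  have hsd : HasDerivAt (fun u : ℝ => Real.sqrt ((1 - u^2)*(1 - x^2*u^2)))
      ((-(2*t) * (1 - x^2*t^2) + (1 - t^2) * -(x^2*(2*t))) / (2*s)) t :=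
    hQd.sqrt hQt.ne'
  have hnum : HasDerivAt (fun u : ℝ => (1+x)*u) (1+x) t := by
    simpa using (hasDerivAt_id t).const_mul (1+x)
  have hdiv : HasDerivAt (fun u : ℝ => (1+x)*u / Real.sqrt ((1 - u^2)*(1 - x^2*u^2)))
      (((1+x) * s - (1+x)*t * ((-(2*t) * (1 - x^2*t^2) + (1 - t^2) * -(x^2*(2*t))) / (2*s)))
        / s ^ 2) t := hnum.div hsd hs0.ne'
  have harc := (Real.hasDerivAt_arctan ((1+x)*t / s)).comp t hdiv
  have := harc.const_mul ((2*(1+x))⁻¹)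
  refine this.congr_deriv ?_
  symm
  have hnum2 : s^2 + (1+x)^2*t^2 = (1 + x*t^2)^2 := by rw [hs2]; ring
  have hd : 1 + ((1+x)*t / s) ^ 2 = (1 + x*t^2)^2 / s^2 := by
    rw [← hnum2]
    field_simp
  rw [hd]
  field_simp
  linear_combination (-1) * hs2



theorem ellPi_neg_sub_half_ellK' (x : ℝ) (hx1 : -1 < x) (hx2 : x < 1) :
    (∫ t in (0:ℝ)..1, 1 / ((1 - -x * t ^ 2) * Real.sqrt ((1 - t ^ 2) * (1 - x ^ 2 * t ^ 2))))
      - (1 / 2) * (∫ t in (0:ℝ)..1, 1 / Real.sqrt ((1 - t ^ 2) * (1 - x ^ 2 * t ^ 2)))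
      = Real.pi / (4 * (x + 1)) := by
  have hx0 : (0:ℝ) < 1 + x := by linarith
  have hg := gInt hx1 hx2
  have hpt : ∀ t ∈ Set.uIcc (0:ℝ) 1, (0:ℝ) < 1 + x * t ^ 2 := by
    intro t ht
    rw [Set.uIcc_of_le (by norm_num : (0:ℝ) ≤ 1)] at ht
    have ht2 : t ^ 2 ≤ 1 := by nlinarith [ht.1, ht.2]
    rcases le_or_gt x 0 with hxn | hxp
    · nlinarith [mul_le_mul_of_nonpos_left ht2 hxn]
    · nlinarith [mul_nonneg hxp.le (sq_nonneg t)]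
  -- integrability of the Pi integrand
  have hcontPi : ContinuousOn (fun t : ℝ => 1 / (1 - -x * t ^ 2)) (Set.uIcc (0:ℝ) 1) := by
    apply ContinuousOn.div continuousOn_const (by fun_prop)
    intro t ht
    have := hpt t ht
    intro hcon
    rw [sub_eq_zero] at hcon
    nlinarith
  have hPiInt : IntervalIntegrable
      (fun t : ℝ => 1 / ((1 - -x * t ^ 2) * Real.sqrt ((1 - t ^ 2) * (1 - x ^ 2 * t ^ 2))))
      volume 0 1 := by
    have hmul := hg.continuousOn_mul hcontPi
    have hfun : (fun t : ℝ => (1 / (1 - -x * t ^ 2)) *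
        (1 / Real.sqrt ((1 - t ^ 2) * (1 - x ^ 2 * t ^ 2)))) =
        fun t : ℝ => 1 / ((1 - -x * t ^ 2) * Real.sqrt ((1 - t ^ 2) * (1 - x ^ 2 * t ^ 2))) := by
      funext t
      rw [div_mul_div_comm, one_mul]
    rwa [hfun] at hmul
  -- integrability of h
  have hcont2 : ContinuousOn (fun t : ℝ => (1 - x * t ^ 2) / (2 * (1 + x * t ^ 2)))
      (Set.uIcc (0:ℝ) 1) := by
    apply ContinuousOn.div (by fun_prop) (by fun_prop)
    intro t ht
    have := hpt t ht
    positivity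
  have hInth : IntervalIntegrable
      (fun t : ℝ => (1 - x * t ^ 2) / (2 * (1 + x * t ^ 2) * Real.sqrt ((1 - t ^ 2) * (1 - x ^ 2 * t ^ 2))))
      volume 0 1 := by
    have hmul := hg.continuousOn_mul hcont2
    have hfun : (fun t : ℝ => ((1 - x * t ^ 2) / (2 * (1 + x * t ^ 2))) *
        (1 / Real.sqrt ((1 - t ^ 2) * (1 - x ^ 2 * t ^ 2)))) =
        fun t : ℝ => (1 - x * t ^ 2) /
          (2 * (1 + x * t ^ 2) * Real.sqrt ((1 - t ^ 2) * (1 - x ^ 2 * t ^ 2))) := by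
      funext t
      rw [div_mul_div_comm, mul_one]
    rwa [hfun] at hmul
  -- combine the two integrals
  rw [← intervalIntegral.integral_const_mul,
    ← intervalIntegral.integral_sub hPiInt (hg.const_mul (1/2))]
  have hcongr : Set.EqOn
      (fun t : ℝ => 1 / ((1 - -x * t ^ 2) * Real.sqrt ((1 - t ^ 2) * (1 - x ^ 2 * t ^ 2)))
        - 1 / 2 * (1 / Real.sqrt ((1 - t ^ 2) * (1 - x ^ 2 * t ^ 2))))
      (fun t : ℝ => (1 - x * t ^ 2) /
        (2 * (1 + x * t ^ 2) * Real.sqrt ((1 - t ^ 2) * (1 - x ^ 2 * t ^ 2))))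
      (Set.uIcc (0:ℝ) 1) := by
    intro t ht
    have hp := hpt t ht
    simp only
    rcases eq_or_lt_of_le (Real.sqrt_nonneg ((1 - t ^ 2) * (1 - x ^ 2 * t ^ 2))) with hs | hs
    · rw [← hs]
      simp
    · have hne : (1 : ℝ) - -x * t ^ 2 ≠ 0 := by intro hcon; rw [sub_eq_zero] at hcon; nlinarith
      have hp' : (1 : ℝ) + x * t ^ 2 ≠ 0 := hp.ne'
      field_simp
      rw [sub_neg_eq_add, sub_mul, div_mul_cancel₀ _ hp']
      ring
  rw [intervalIntegral.integral_congr hcongr]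
  -- FTC and limit
  set l : Filter ℝ := nhdsWithin 1 (Set.Ioo (0:ℝ) 1) with hl
  have hne : l.NeBot := right_nhdsWithin_Ioo_neBot (by norm_num)
  set F : ℝ → ℝ := fun u => (2*(1+x))⁻¹ *
      Real.arctan ((1+x)*u / Real.sqrt ((1 - u^2)*(1 - x^2*u^2))) with hF
  have hF0 : F 0 = 0 := by simp [hF]
  have hFTC : ∀ b ∈ Set.Ico (0:ℝ) 1,
      (∫ t in (0:ℝ)..b, (1 - x * t ^ 2) /
        (2 * (1 + x * t ^ 2) * Real.sqrt ((1 - t ^ 2) * (1 - x ^ 2 * t ^ 2)))) = F b - F 0 := by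
    intro b hb
    apply intervalIntegral.integral_eq_sub_of_hasDerivAt
    · intro t ht
      rw [Set.uIcc_of_le hb.1] at ht
      exact hasDerivF hx1 hx2 ht.1 (lt_of_le_of_lt ht.2 hb.2)
    · refine hInth.mono_set ?_
      rw [Set.uIcc_of_le hb.1, Set.uIcc_of_le (by norm_num : (0:ℝ) ≤ 1)]
      exact Set.Icc_subset_Icc le_rfl hb.2.le
  have T1 : Tendsto (fun b => ∫ t in (0:ℝ)..b, (1 - x * t ^ 2) /
        (2 * (1 + x * t ^ 2) * Real.sqrt ((1 - t ^ 2) * (1 - x ^ 2 * t ^ 2)))) l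
      (𝓝 (∫ t in (0:ℝ)..1, (1 - x * t ^ 2) /
        (2 * (1 + x * t ^ 2) * Real.sqrt ((1 - t ^ 2) * (1 - x ^ 2 * t ^ 2))))) := by
    have hco := intervalIntegral.continuousOn_primitive_interval' hInth
      (Set.left_mem_uIcc (a := (0:ℝ)) (b := 1))
    have := (hco 1 (Set.right_mem_uIcc (a := (0:ℝ)) (b := 1)))
    refine this.tendsto.mono_left ?_
    apply nhdsWithin_mono
    rw [Set.uIcc_of_le (by norm_num : (0:ℝ) ≤ 1)]
    exact Set.Ioo_subset_Icc_self
  have hden : Tendsto (fun b : ℝ => Real.sqrt ((1 - b^2)*(1 - x^2*b^2))) l (nhdsWithin 0 (Set.Ioi 0)) := by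
    rw [tendsto_nhdsWithin_iff]
    constructor
    · have hc : Continuous (fun b : ℝ => Real.sqrt ((1 - b^2)*(1 - x^2*b^2))) := by fun_prop
      have h0 : Real.sqrt ((1 - (1:ℝ)^2)*(1 - x^2*(1:ℝ)^2)) = 0 := by norm_num
      have h3 : l ≤ nhds 1 := nhdsWithin_le_nhds
      have := (hc.tendsto 1).mono_left h3
      rwa [h0] at this
    · filter_upwards [self_mem_nhdsWithin] with b hb
      have hb2 : b ^ 2 < 1 := by nlinarith [hb.1, hb.2]
      apply Real.sqrt_pos.2
      apply mul_pos (by nlinarith)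
      nlinarith [sq_nonneg (x*b), sq_nonneg x, sq_nonneg b]
  have hv : Tendsto (fun b : ℝ => (1+x)*b / Real.sqrt ((1 - b^2)*(1 - x^2*b^2))) l atTop := by
    have h1 : Tendsto (fun b : ℝ => (1+x)*b) l (𝓝 (1+x)) := by
      have hc : Continuous (fun b : ℝ => (1+x)*b) := by fun_prop
      have h3 : l ≤ nhds 1 := nhdsWithin_le_nhds
      have := (hc.tendsto 1).mono_left h3
      simpa using this
    have h2 : Tendsto (fun b : ℝ => (Real.sqrt ((1 - b^2)*(1 - x^2*b^2)))⁻¹) l atTop :=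
      hden.inv_tendsto_nhdsGT_zero
    have := h1.pos_mul_atTop hx0 h2
    simpa [div_eq_mul_inv] using this
  have T2 : Tendsto F l (𝓝 ((2*(1+x))⁻¹ * (Real.pi/2))) := by
    have harct : Tendsto (fun b : ℝ => Real.arctan ((1+x)*b /
        Real.sqrt ((1 - b^2)*(1 - x^2*b^2)))) l (𝓝 (Real.pi/2)) :=
      (Real.tendsto_arctan_atTop.mono_right nhdsWithin_le_nhds).comp hv
    exact harct.const_mul _
  have T2' : Tendsto (fun b => F b - F 0) l (𝓝 ((2*(1+x))⁻¹ * (Real.pi/2))) := by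
    rw [hF0]
    simpa using T2.sub_const 0
  have Tfinal : Tendsto (fun b => ∫ t in (0:ℝ)..b, (1 - x * t ^ 2) /
        (2 * (1 + x * t ^ 2) * Real.sqrt ((1 - t ^ 2) * (1 - x ^ 2 * t ^ 2)))) l
      (𝓝 ((2*(1+x))⁻¹ * (Real.pi/2))) := by
    apply T2'.congr'
    filter_upwards [self_mem_nhdsWithin] with b hb
    exact (hFTC b ⟨hb.1.le, hb.2⟩).symm
  have hval := tendsto_nhds_unique T1 Tfinal
  rw [hval]
  have h44 : (x:ℝ) + 1 ≠ 0 := by linarith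
  field_simp
  ring

end EllAux

/-- For every real `−1 < x < 1`, `Π(−x, x) − (1/2)·K(x) = π/(4(x+1))`. -/
theorem ellPi_neg_sub_half_ellK (x : ℝ) (hx1 : -1 < x) (hx2 : x < 1) :
    ellPi (-x) x - (1 / 2) * ellK x = Real.pi / (4 * (x + 1)) := by
  unfold ellPi ellK
  exact ellPi_neg_sub_half_ellK' x hx1 hx2
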